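/- Let F : ℝ^n → ℝ^n be continuously differentiable on a neighborhood of p* with F(p*) = 0 and DF(p*) invertible. Then there exist η̄ > 0 and ε > 0 such that: for every inexact Newton sequence (p_k) with forcing terms (η_k) satisfying η_k ≤ η̄ for all k and η_k → 0 as k → ∞, if ‖p_0 − p*‖ ≤ ε then p_k → p* q-superlinearly, i.e., p_k → p* and for every δ > 0 there exists K such that ‖p_{k+1} − p*‖ ≤ δ ‖p_k − p*‖ for all k ≥ K. -/

import Mathlib

open Filter Topology

set_option maxHeartbeats 1000000 in
/-- Local q-superlinear convergence of inexact Newton sequences whose forcing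
terms tend to zero. -/
theorem inexact_newton_qsuperlinear_convergence
    (n : ℕ) (F : EuclideanSpace ℝ (Fin n) → EuclideanSpace ℝ (Fin n))
    (pstar : EuclideanSpace ℝ (Fin n))
    (hF : ∃ U : Set (EuclideanSpace ℝ (Fin n)),
      IsOpen U ∧ pstar ∈ U ∧ ContDiffOn ℝ 1 F U)
    (hroot : F pstar = 0)
    (hinv : IsUnit (fderiv ℝ F pstar)) :
    ∃ ηbar > (0:ℝ), ∃ ε > (0:ℝ),
      ∀ (p : ℕ → EuclideanSpace ℝ (Fin n)) (η : ℕ → ℝ),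
        (∀ k, 0 ≤ η k) →
        (∀ k, η k ≤ ηbar) →
        Tendsto η atTop (𝓝 0) →
        (∀ k, ‖F (p k) + (fderiv ℝ F (p k)) (p (k+1) - p k)‖ ≤ η k * ‖F (p k)‖) →
        ‖p 0 - pstar‖ ≤ ε →
        Tendsto p atTop (𝓝 pstar) ∧
        ∀ δ > (0:ℝ), ∃ K : ℕ, ∀ k ≥ K,
          ‖p (k+1) - pstar‖ ≤ δ * ‖p k - pstar‖ := by
  classical
  obtain ⟨U, hU, hmemU, hC⟩ := hF
  set A : EuclideanSpace ℝ (Fin n) →L[ℝ] EuclideanSpace ℝ (Fin n) :=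
    fderiv ℝ F pstar with hA
  obtain ⟨u, hu⟩ := hinv
  set B : EuclideanSpace ℝ (Fin n) →L[ℝ] EuclideanSpace ℝ (Fin n) := ↑u⁻¹ with hB
  have hBA : ∀ e : EuclideanSpace ℝ (Fin n), B (A e) = e := by
    intro e
    have h1 : (↑u⁻¹ * ↑u : EuclideanSpace ℝ (Fin n) →L[ℝ] EuclideanSpace ℝ (Fin n)) = 1 :=
      u.inv_mul
    rw [hu] at h1
    have := congrArg (fun T : EuclideanSpace ℝ (Fin n) →L[ℝ] EuclideanSpace ℝ (Fin n) => T e) h1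
    simpa [ContinuousLinearMap.mul_apply] using this
  obtain ⟨c, hc⟩ : ∃ c : ℝ, c = ‖B‖ + 1 := ⟨_, rfl⟩
  have hcpos : (0:ℝ) < c := by have := norm_nonneg B; rw [hc]; linarith
  have hc1 : (1:ℝ) ≤ c := by
    have := norm_nonneg B; rw [hc]; linarith
  have hlow : ∀ e : EuclideanSpace ℝ (Fin n), ‖e‖ ≤ c * ‖A e‖ := by
    intro e
    calc ‖e‖ = ‖B (A e)‖ := by rw [hBA]
    _ ≤ ‖B‖ * ‖A e‖ := B.le_opNorm _
    _ ≤ c * ‖A e‖ := by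
        apply mul_le_mul_of_nonneg_right _ (norm_nonneg _)
        rw [hc]; linarith [norm_nonneg B]
  obtain ⟨M0, hM0⟩ : ∃ M0 : ℝ, M0 = ‖A‖ + 1 := ⟨_, rfl⟩
  have hM0pos : (0:ℝ) < M0 := by have := norm_nonneg A; rw [hM0]; linarith
  have hM01 : (1:ℝ) ≤ M0 := by have := norm_nonneg A; rw [hM0]; linarith
  obtain ⟨μ, hμ⟩ : ∃ μ : ℝ, μ = min 1 (1/(16*c)) := ⟨_, rfl⟩
  have hμpos : 0 < μ := by
    rw [hμ]; exact lt_min one_pos (by positivity)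
  have hμ1 : μ ≤ 1 := by rw [hμ]; exact min_le_left _ _
  have hμc : μ ≤ 1/(16*c) := by rw [hμ]; exact min_le_right _ _
  -- continuity of the derivative at pstar
  have hcont : ContinuousOn (fderiv ℝ F) U :=
    hC.continuousOn_fderiv_of_isOpen hU le_rfl
  have hca : ContinuousAt (fderiv ℝ F) pstar :=
    hcont.continuousAt (hU.mem_nhds hmemU)
  -- a radius where the derivative is μ-close to A and inside U
  have hgen : ∀ θ : ℝ, 0 < θ → ∃ ρ > (0:ℝ),
      Metric.closedBall pstar ρ ⊆ U ∧
      ∀ y ∈ Metric.closedBall pstar ρ, ‖fderiv ℝ F y - A‖ ≤ θ := by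
    intro θ hθ
    have h1 : (fderiv ℝ F) ⁻¹' Metric.ball A θ ∈ 𝓝 pstar := by
      apply hca
      exact Metric.ball_mem_nhds _ hθ
    have h2 : U ∩ (fderiv ℝ F) ⁻¹' Metric.ball A θ ∈ 𝓝 pstar :=
      Filter.inter_mem (hU.mem_nhds hmemU) h1
    obtain ⟨ρ, hρpos, hρ⟩ := (Metric.nhds_basis_closedBall.mem_iff).1 h2
    refine ⟨ρ, hρpos, fun y hy => (hρ hy).1, fun y hy => ?_⟩
    have := (hρ hy).2
    simp only [Set.mem_preimage, Metric.mem_ball, dist_eq_norm] at this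
    exact this.le
  obtain ⟨r, hrpos, hrU, hrμ⟩ := hgen μ hμpos
  -- derivative bounds on the ball of radius r
  have hderiv : ∀ y ∈ Metric.closedBall pstar r, HasFDerivAt F (fderiv ℝ F y) y := by
    intro y hy
    have hd : DifferentiableOn ℝ F U := hC.differentiableOn one_ne_zero
    exact ((hd y (hrU hy)).differentiableAt (hU.mem_nhds (hrU hy))).hasFDerivAt
  have hMb : ∀ y ∈ Metric.closedBall pstar r, ‖fderiv ℝ F y‖ ≤ M0 := by
    intro y hy
    calc ‖fderiv ℝ F y‖ = ‖(fderiv ℝ F y - A) + A‖ := by rw [sub_add_cancel]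
    _ ≤ ‖fderiv ℝ F y - A‖ + ‖A‖ := norm_add_le _ _
    _ ≤ μ + ‖A‖ := by linarith [hrμ y hy]
    _ ≤ M0 := by rw [hM0]; linarith
  have hpstar_mem : ∀ ρ : ℝ, 0 ≤ ρ → pstar ∈ Metric.closedBall pstar ρ := by
    intro ρ hρ; simpa using hρ
  -- bound on F via mean value inequality
  have hFb : ∀ x ∈ Metric.closedBall pstar r, ‖F x‖ ≤ M0 * ‖x - pstar‖ := by
    intro x hx
    have hmv := Convex.norm_image_sub_le_of_norm_hasFDerivWithin_le
      (f := F) (f' := fun y => fderiv ℝ F y) (C := M0) (s := Metric.closedBall pstar r)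
      (fun y hy => (hderiv y hy).hasFDerivWithinAt) hMb (convex_closedBall _ _)
      (hpstar_mem r (le_of_lt hrpos)) hx
    calc ‖F x‖ = ‖F x - F pstar‖ := by rw [hroot]; simp
    _ ≤ M0 * ‖x - pstar‖ := hmv
  -- key single-step estimate
  have hstep : ∀ θ ρ : ℝ, 0 < θ → θ ≤ μ → ρ ≤ r →
      (∀ y ∈ Metric.closedBall pstar ρ, ‖fderiv ℝ F y - A‖ ≤ θ) →
      ∀ (x x' : EuclideanSpace ℝ (Fin n)) (ηk : ℝ), 0 ≤ ηk →
      x ∈ Metric.closedBall pstar ρ →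
      ‖F x + (fderiv ℝ F x) (x' - x)‖ ≤ ηk * ‖F x‖ →
      ‖x' - pstar‖ ≤ 2*c*(ηk*M0 + 2*θ) * ‖x - pstar‖ := by
    intro θ ρ hθ hθμ hρr hb x x' ηk hηk hx hres
    have hρ0 : 0 ≤ ρ := le_trans dist_nonneg (Metric.mem_closedBall.1 hx)
    have hsub : Metric.closedBall pstar ρ ⊆ Metric.closedBall pstar r :=
      Metric.closedBall_subset_closedBall hρr
    set G : EuclideanSpace ℝ (Fin n) →L[ℝ] EuclideanSpace ℝ (Fin n) :=
      fderiv ℝ F x with hG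
    have hGA : ‖G - A‖ ≤ θ := hb x hx
    -- mean value with φ = G on the ρ-ball
    have hmv := Convex.norm_image_sub_le_of_norm_hasFDerivWithin_le'
      (f := F) (f' := fun y => fderiv ℝ F y) (φ := G) (C := 2*θ)
      (s := Metric.closedBall pstar ρ)
      (fun y hy => (hderiv y (hsub hy)).hasFDerivWithinAt)
      (fun y hy => by
        calc ‖fderiv ℝ F y - G‖ = ‖(fderiv ℝ F y - A) - (G - A)‖ := by abel_nf
        _ ≤ ‖fderiv ℝ F y - A‖ + ‖G - A‖ := norm_sub_le _ _
        _ ≤ 2*θ := by linarith [hb y hy])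
      (convex_closedBall _ _) (hpstar_mem ρ hρ0) hx
    -- hmv : ‖F x - F pstar - G (x - pstar)‖ ≤ 2θ‖x - pstar‖
    have hkey : G (x' - pstar) =
        (F x + G (x' - x)) + -(F x - F pstar - G (x - pstar)) := by
      rw [hroot]
      simp only [map_sub]
      abel
    have h2 : ‖G (x' - pstar)‖ ≤ ηk * ‖F x‖ + 2*θ*‖x - pstar‖ := by
      rw [hkey]
      calc ‖(F x + G (x' - x)) + -(F x - F pstar - G (x - pstar))‖
          ≤ ‖F x + G (x' - x)‖ + ‖-(F x - F pstar - G (x - pstar))‖ := norm_add_le _ _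
      _ = ‖F x + G (x' - x)‖ + ‖F x - F pstar - G (x - pstar)‖ := by rw [norm_neg]
      _ ≤ ηk * ‖F x‖ + 2*θ*‖x - pstar‖ := by
          have := hmv
          gcongr
    have hxr : x ∈ Metric.closedBall pstar r := hsub hx
    have h3 : ηk * ‖F x‖ ≤ ηk * (M0 * ‖x - pstar‖) :=
      mul_le_mul_of_nonneg_left (hFb x hxr) hηk
    -- lower bound
    have h4 : ‖x' - pstar‖ ≤ c * ‖A (x' - pstar)‖ := hlow _
    have h5 : ‖A (x' - pstar)‖ ≤ ‖G (x' - pstar)‖ + θ * ‖x' - pstar‖ := by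
      calc ‖A (x' - pstar)‖ = ‖G (x' - pstar) - (G - A) (x' - pstar)‖ := by
            congr 1
            simp [ContinuousLinearMap.sub_apply]
      _ ≤ ‖G (x' - pstar)‖ + ‖(G - A) (x' - pstar)‖ := norm_sub_le _ _
      _ ≤ ‖G (x' - pstar)‖ + θ * ‖x' - pstar‖ := by
          gcongr
          calc ‖(G - A) (x' - pstar)‖ ≤ ‖G - A‖ * ‖x' - pstar‖ := (G - A).le_opNorm _
          _ ≤ θ * ‖x' - pstar‖ := mul_le_mul_of_nonneg_right hGA (norm_nonneg _)
    have hcθ : c * θ ≤ 1/2 := by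
      have h1 : θ ≤ 1/(16*c) := le_trans hθμ hμc
      have h16 : (0:ℝ) < 16 * c := by positivity
      rw [le_div_iff₀ h16] at h1
      nlinarith
    have hnn : (0:ℝ) ≤ ‖x' - pstar‖ := norm_nonneg _
    -- combine: ‖x'-p*‖ ≤ c(‖G(x'-p*)‖ + θ‖x'-p*‖) so (1-cθ)‖x'-p*‖ ≤ c‖G(x'-p*)‖
    have h6 : ‖x' - pstar‖ ≤ 2 * c * ‖G (x' - pstar)‖ := by
      have ha := hlow (x' - pstar)
      have hb' := mul_le_mul_of_nonneg_left h5 hcpos.le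
      have hcc := mul_le_mul_of_nonneg_right hcθ hnn
      nlinarith [norm_nonneg (G (x' - pstar))]
    calc ‖x' - pstar‖ ≤ 2 * c * ‖G (x' - pstar)‖ := h6
    _ ≤ 2 * c * (ηk * (M0 * ‖x - pstar‖) + 2*θ*‖x - pstar‖) := by
        gcongr
        linarith
    _ = 2*c*(ηk*M0 + 2*θ) * ‖x - pstar‖ := by ring
  -- choose the constants
  refine ⟨1/(16*c*M0), by positivity, r, hrpos, ?_⟩
  intro p η hη0 hηbar hηtend hres hp0
  -- geometric decay
  have hdecay : ∀ k, ‖p k - pstar‖ ≤ (1/2)^k * r := by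
    intro k
    induction k with
    | zero => simpa using hp0
    | succ k ih =>
      have hhalf : (1/2:ℝ)^k * r ≤ r := by
        have : (1/2:ℝ)^k ≤ 1 := pow_le_one₀ (by norm_num) (by norm_num)
        nlinarith
      have hxball : p k ∈ Metric.closedBall pstar r := by
        simp only [Metric.mem_closedBall, dist_eq_norm]
        linarith
      have hs := hstep μ r hμpos le_rfl le_rfl hrμ (p k) (p (k+1)) (η k)
        (hη0 k) hxball (hres k)
      have hfac : 2*c*(η k * M0 + 2*μ) ≤ 1/2 := by
        have h1 : η k * M0 ≤ 1/(16*c) := by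
          have := hηbar k
          have hcm : (0:ℝ) < 16*c*M0 := by positivity
          have : η k * M0 ≤ (1/(16*c*M0)) * M0 :=
            mul_le_mul_of_nonneg_right this (le_of_lt hM0pos)
          calc η k * M0 ≤ (1/(16*c*M0)) * M0 := this
          _ = 1/(16*c) := by field_simp
        have h2 : μ ≤ 1/(16*c) := hμc
        have h16 : (0:ℝ) < 16*c := by positivity
        rw [le_div_iff₀ h16] at h1 h2
        nlinarith
      have hnn : (0:ℝ) ≤ ‖p k - pstar‖ := norm_nonneg _
      have hnn2 : (0:ℝ) ≤ 2*c*(η k * M0 + 2*μ) := by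
        have := hη0 k
        positivity
      calc ‖p (k+1) - pstar‖ ≤ 2*c*(η k * M0 + 2*μ) * ‖p k - pstar‖ := hs
      _ ≤ (1/2) * ‖p k - pstar‖ := mul_le_mul_of_nonneg_right hfac hnn
      _ ≤ (1/2) * ((1/2)^k * r) := by linarith
      _ = (1/2)^(k+1) * r := by ring
  have hbound_tend : Tendsto (fun k => (1/2:ℝ)^k * r) atTop (𝓝 0) := by
    have := (tendsto_pow_atTop_nhds_zero_of_lt_one (by norm_num : (0:ℝ) ≤ 1/2)
      (by norm_num : (1/2:ℝ) < 1)).mul_const r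
    simpa using this
  have hnorm_tend : Tendsto (fun k => ‖p k - pstar‖) atTop (𝓝 0) :=
    squeeze_zero (fun k => norm_nonneg _) hdecay hbound_tend
  have hptend : Tendsto p atTop (𝓝 pstar) :=
    tendsto_iff_norm_sub_tendsto_zero.2 hnorm_tend
  refine ⟨hptend, ?_⟩
  -- superlinear convergence
  intro δ hδ
  obtain ⟨θ, hθdef⟩ : ∃ θ : ℝ, θ = min μ (δ/(8*c)) := ⟨_, rfl⟩
  have hθpos : 0 < θ := by rw [hθdef]; exact lt_min hμpos (by positivity)
  have hθμ : θ ≤ μ := by rw [hθdef]; exact min_le_left _ _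
  have hθδ : θ ≤ δ/(8*c) := by rw [hθdef]; exact min_le_right _ _
  obtain ⟨ρ', hρ'pos, _, hρ'b⟩ := hgen θ hθpos
  obtain ⟨ρ, hρdef⟩ : ∃ ρ : ℝ, ρ = min ρ' r := ⟨_, rfl⟩
  have hρpos : 0 < ρ := by rw [hρdef]; exact lt_min hρ'pos hrpos
  have hρr : ρ ≤ r := by rw [hρdef]; exact min_le_right _ _
  have hρb : ∀ y ∈ Metric.closedBall pstar ρ, ‖fderiv ℝ F y - A‖ ≤ θ := fun y hy =>
    hρ'b y (Metric.closedBall_subset_closedBall (hρdef ▸ min_le_left _ _) hy)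
  -- eventually small
  have hev1 : ∀ᶠ k in atTop, ‖p k - pstar‖ < ρ :=
    hnorm_tend.eventually_lt_const hρpos
  have hev2 : ∀ᶠ k in atTop, η k < δ/(8*c*M0) :=
    hηtend.eventually_lt_const (by positivity)
  obtain ⟨K, hK⟩ := (hev1.and hev2).exists_forall_of_atTop
  refine ⟨K, fun k hk => ?_⟩
  obtain ⟨hk1, hk2⟩ := hK k hk
  have hxball : p k ∈ Metric.closedBall pstar ρ := by
    simp only [Metric.mem_closedBall, dist_eq_norm]
    exact hk1.le
  have hs := hstep θ ρ hθpos hθμ hρr hρb (p k) (p (k+1)) (η k) (hη0 k) hxball (hres k)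
  have hfac : 2*c*(η k * M0 + 2*θ) ≤ δ := by
    have h1 : η k * M0 ≤ δ/(8*c) := by
      have : η k ≤ δ/(8*c*M0) := hk2.le
      have h8 : (0:ℝ) < 8*c*M0 := by positivity
      calc η k * M0 ≤ (δ/(8*c*M0)) * M0 :=
        mul_le_mul_of_nonneg_right this (le_of_lt hM0pos)
      _ = δ/(8*c) := by field_simp
    have h8c : (0:ℝ) < 8*c := by positivity
    rw [div_eq_mul_inv] at h1 hθδ
    have hinv8 : (8*c)⁻¹ * (8*c) = 1 := inv_mul_cancel₀ (ne_of_gt h8c)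
    nlinarith
  have hnn : (0:ℝ) ≤ ‖p k - pstar‖ := norm_nonneg _
  calc ‖p (k+1) - pstar‖ ≤ 2*c*(η k * M0 + 2*θ) * ‖p k - pstar‖ := hs
  _ ≤ δ * ‖p k - pstar‖ := mul_le_mul_of_nonneg_right hfac hnn
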